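/- arXiv:2505.23426 — 2 statements merged into one kernel-verified Lean document; each statement's English description precedes it below -/
import Mathlib

section
/- Let μ be a σ-finite measure on a measurable space A, let Q : A → ℝ be measurable, and let α > 0 with Z := ∫ exp(Q(a)/α) dμ(a) ∈ (0, ∞). Define the Boltzmann (soft-policy) density g(a) := exp(Q(a)/α)/Z. Then for every probability density π with respect to μ whose differential entropy H(π) := −∫ π(a) log π(a) dμ(a) is well-defined and equals H(g), and for which ∫ Q(a) π(a) dμ(a) is well-defined, one has ∫ Q(a) π(a) dμ(a) ≤ ∫ Q(a) g(a) dμ(a). That is, among all densities with the same entropy as the Boltzmann density, the Boltzmann density maximizes the expected value of Q. -/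
open MeasureTheory Real

/-- Among all probability densities (w.r.t. a σ-finite measure `μ`) whose differential
entropy is well-defined and equals that of the Boltzmann density
`g a = exp (Q a / α) / Z`, the Boltzmann density maximizes the expected value of `Q`. -/
theorem boltzmann_maximizes_expected_Q_at_fixed_entropy
    {A : Type*} [MeasurableSpace A] (μ : Measure A) [SigmaFinite μ]
    (Q : A → ℝ) (hQ : Measurable Q) (α : ℝ) (hα : 0 < α)
    (hexp : Integrable (fun a => Real.exp (Q a / α)) μ)
    (Z : ℝ) (hZdef : Z = ∫ a, Real.exp (Q a / α) ∂μ) (hZpos : 0 < Z)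
    (g : A → ℝ) (hgdef : ∀ a, g a = Real.exp (Q a / α) / Z)
    (hQg : Integrable (fun a => Q a * g a) μ)
    (hEntg : Integrable (fun a => g a * Real.log (g a)) μ)
    (p : A → ℝ) (hpmeas : Measurable p) (hpnn : ∀ a, 0 ≤ p a)
    (hpint : Integrable p μ) (hpone : ∫ a, p a ∂μ = 1)
    (hQp : Integrable (fun a => Q a * p a) μ)
    (hEntp : Integrable (fun a => p a * Real.log (p a)) μ)
    (hent_eq : (-∫ a, p a * Real.log (p a) ∂μ) = (-∫ a, g a * Real.log (g a) ∂μ)) :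
    ∫ a, Q a * p a ∂μ ≤ ∫ a, Q a * g a ∂μ := by
  have hgpos : ∀ a, 0 < g a := fun a => by
    rw [hgdef]; exact div_pos (Real.exp_pos _) hZpos
  have hlogg : ∀ a, Real.log (g a) = Q a / α - Real.log Z := fun a => by
    rw [hgdef, Real.log_div (ne_of_gt (Real.exp_pos _)) (ne_of_gt hZpos), Real.log_exp]
  -- g integrable and integrates to 1
  have hgint : Integrable g μ := by
    have := hexp.div_const Z
    apply this.congr
    filter_upwards with a using (hgdef a).symm
  have hgone : ∫ a, g a ∂μ = 1 := by
    simp only [hgdef]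
    rw [integral_div, ← hZdef, div_self (ne_of_gt hZpos)]
  -- p * log g is integrable
  have hplogg_int : Integrable (fun a => p a * Real.log (g a)) μ := by
    have h1 : Integrable (fun a => (Q a * p a) / α - Real.log Z * p a) μ :=
      (hQp.div_const α).sub (hpint.const_mul _)
    apply h1.congr
    filter_upwards with a
    rw [hlogg a]; ring
  -- Gibbs' inequality: ∫ p log g ≤ ∫ p log p
  have hgibbs : ∫ a, p a * Real.log (g a) ∂μ ≤ ∫ a, p a * Real.log (p a) ∂μ := by
    have hptw : ∀ a, p a * Real.log (g a) - p a * Real.log (p a) ≤ g a - p a := by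
      intro a
      rcases eq_or_lt_of_le (hpnn a) with h0 | hp
      · simp [← h0]
        exact le_of_lt (hgpos a)
      · have hlog : Real.log (g a) - Real.log (p a) = Real.log (g a / p a) := by
          rw [Real.log_div (ne_of_gt (hgpos a)) (ne_of_gt hp)]
        have hle : Real.log (g a / p a) ≤ g a / p a - 1 :=
          Real.log_le_sub_one_of_pos (div_pos (hgpos a) hp)
        calc p a * Real.log (g a) - p a * Real.log (p a)
            = p a * (Real.log (g a) - Real.log (p a)) := by ring
          _ = p a * Real.log (g a / p a) := by rw [hlog]
          _ ≤ p a * (g a / p a - 1) := by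
              exact mul_le_mul_of_nonneg_left hle (le_of_lt hp)
          _ = g a - p a := by field_simp
    have hint : ∫ a, (p a * Real.log (g a) - p a * Real.log (p a)) ∂μ ≤
        ∫ a, (g a - p a) ∂μ := by
      apply integral_mono (hplogg_int.sub hEntp) (hgint.sub hpint) hptw
    rw [integral_sub hplogg_int hEntp, integral_sub hgint hpint, hgone, hpone] at hint
    linarith
  -- compute the two integrals involving log g
  have hplogg_eq : ∫ a, p a * Real.log (g a) ∂μ
      = (∫ a, Q a * p a ∂μ) / α - Real.log Z := by
    have : (fun a => p a * Real.log (g a))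
        = fun a => (Q a * p a) / α - Real.log Z * p a := by
      funext a; rw [hlogg a]; ring
    rw [this, integral_sub (hQp.div_const α) (hpint.const_mul _), integral_div,
      integral_const_mul, hpone, mul_one]
  have hglogg_eq : ∫ a, g a * Real.log (g a) ∂μ
      = (∫ a, Q a * g a ∂μ) / α - Real.log Z := by
    have : (fun a => g a * Real.log (g a))
        = fun a => (Q a * g a) / α - Real.log Z * g a := by
      funext a; rw [hlogg a]; ring
    rw [this, integral_sub (hQg.div_const α) (hgint.const_mul _), integral_div,
      integral_const_mul, hgone, mul_one]
  have hent : ∫ a, p a * Real.log (p a) ∂μ = ∫ a, g a * Real.log (g a) ∂μ := by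
    linarith
  rw [hplogg_eq, hent, hglogg_eq] at hgibbs
  calc ∫ a, Q a * p a ∂μ = ((∫ a, Q a * p a ∂μ) / α) * α := by
        field_simp
    _ ≤ ((∫ a, Q a * g a ∂μ) / α) * α := by
        apply mul_le_mul_of_nonneg_right (by linarith) (le_of_lt hα)
    _ = ∫ a, Q a * g a ∂μ := by field_simp
end

section
/- Let (S, ν) be a measure space with ν a probability measure (the state distribution p(s)), let μ be a σ-finite measure on a measurable space A, let Q : S × A → ℝ be measurable, and let α > 0 be such that Z(s) := ∫ exp(Q(s,a)/α) dμ(a) ∈ (0, ∞) for ν-almost every s. Define the Boltzmann policy family g(a|s) := exp(Q(s,a)/α)/Z(s). Let {π(·|s)}_{s∈S} be a measurable family of probability densities with respect to μ such that, for ν-almost every s, ∫ Q(s,a) π(a|s) dμ(a) and H(π(·|s)) := −∫ π(a|s) log π(a|s) dμ(a) are well-defined and ν-integrable, and suppose the global expected entropy constraint ∫ H(π(·|s)) dν(s) = ∫ H(g(·|s)) dν(s) holds. Then the global expected action value satisfies ∫∫ Q(s,a) π(a|s) dμ(a) dν(s) ≤ ∫∫ Q(s,a) g(a|s) dμ(a)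 dν(s). That is, under a global expected entropy constraint, the family of Boltzmann policies with a common temperature α maximizes the global expected action value. -/
open MeasureTheory Real

private lemma gibbs_ptwise {x y : ℝ} (hx : 0 ≤ x) (hy : 0 < y) :
    x * Real.log y - x * Real.log x ≤ y - x := by
  rcases eq_or_lt_of_le hx with h | h
  · simp [← h, hy.le]
  · have h1 : Real.log (y / x) ≤ y / x - 1 :=
      Real.log_le_sub_one_of_pos (div_pos hy h)
    have h2 : Real.log (y / x) = Real.log y - Real.log x :=
      Real.log_div hy.ne' h.ne'
    have h3 := mul_le_mul_of_nonneg_left h1 hx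
    rw [h2] at h3
    have : x * (y / x - 1) = y - x := by field_simp
    rw [this] at h3
    linarith [h3, mul_sub x (Real.log y) (Real.log x)]

private lemma gibbs_state {A : Type*} [MeasurableSpace A]
    (μ : Measure A) (q : A → ℝ) (α : ℝ) (hα : 0 < α) (Zv : ℝ)
    (hf : Integrable (fun a => Real.exp (q a / α)) μ)
    (hZ : Zv = ∫ a, Real.exp (q a / α) ∂μ) (hZpos : 0 < Zv)
    (g p : A → ℝ) (hg : ∀ a, g a = Real.exp (q a / α) / Zv)
    (hpnn : ∀ a, 0 ≤ p a) (hpint : Integrable p μ) (hp1 : ∫ a, p a ∂μ = 1)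
    (hQp : Integrable (fun a => q a * p a) μ)
    (hEntp : Integrable (fun a => p a * Real.log (p a)) μ)
    (hQg : Integrable (fun a => q a * g a) μ) :
    (∫ a, q a * p a ∂μ) + α * (-∫ a, p a * Real.log (p a) ∂μ)
      ≤ (∫ a, q a * g a ∂μ) + α * (-∫ a, g a * Real.log (g a) ∂μ) := by
  have hgfun : g = fun a => Real.exp (q a / α) / Zv := funext hg
  have hgint : Integrable g μ := by
    rw [hgfun]; exact hf.div_const Zv
  have hg1 : ∫ a, g a ∂μ = 1 := by
    rw [hgfun, integral_div, ← hZ, div_self hZpos.ne']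
  have hgpos : ∀ a, 0 < g a := fun a => by
    rw [hg a]; exact div_pos (Real.exp_pos _) hZpos
  have hlogg : ∀ a, Real.log (g a) = q a / α - Real.log Zv := fun a => by
    rw [hg a, Real.log_div (Real.exp_ne_zero _) hZpos.ne', Real.log_exp]
  -- p * log g as a combination
  have hplg_eq : (fun a => p a * Real.log (g a))
      = fun a => α⁻¹ * (q a * p a) - Real.log Zv * p a := by
    funext a; rw [hlogg a]; field_simp
  have hplg_int : Integrable (fun a => p a * Real.log (g a)) μ := by
    rw [hplg_eq]; exact (hQp.const_mul α⁻¹).sub (hpint.const_mul _)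
  have hplg : ∫ a, p a * Real.log (g a) ∂μ
      = α⁻¹ * (∫ a, q a * p a ∂μ) - Real.log Zv := by
    rw [hplg_eq, integral_sub (hQp.const_mul α⁻¹) (hpint.const_mul _),
      integral_const_mul, integral_const_mul, hp1, mul_one]
  have hglg_eq : (fun a => g a * Real.log (g a))
      = fun a => α⁻¹ * (q a * g a) - Real.log Zv * g a := by
    funext a; rw [hlogg a]; field_simp
  have hglg : ∫ a, g a * Real.log (g a) ∂μ
      = α⁻¹ * (∫ a, q a * g a ∂μ) - Real.log Zv := by
    rw [hglg_eq, integral_sub (hQg.const_mul α⁻¹) (hgint.const_mul _),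
      integral_const_mul, integral_const_mul, hg1, mul_one]
  -- Gibbs inequality
  have key : ∫ a, (p a * Real.log (g a) - p a * Real.log (p a)) ∂μ
      ≤ ∫ a, (g a - p a) ∂μ := by
    refine integral_mono (hplg_int.sub hEntp) (hgint.sub hpint) ?_
    intro a
    exact gibbs_ptwise (hpnn a) (hgpos a)
  rw [integral_sub hplg_int hEntp, integral_sub hgint hpint, hp1, hg1, hplg]
    at key
  have hkey : α⁻¹ * (∫ a, q a * p a ∂μ) - Real.log Zv
      - ∫ a, p a * Real.log (p a) ∂μ ≤ 0 := by linarith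
  have hmul := mul_le_mul_of_nonneg_left hkey hα.le
  have hαα : α * α⁻¹ = 1 := mul_inv_cancel₀ hα.ne'
  rw [mul_sub, mul_sub, ← mul_assoc, hαα, one_mul, mul_zero] at hmul
  have hG : α * -(α⁻¹ * (∫ a, q a * g a ∂μ) - Real.log Zv)
      = -(∫ a, q a * g a ∂μ) + α * Real.log Zv := by
    rw [neg_sub, mul_sub, ← mul_assoc, hαα, one_mul]; ring
  rw [hglg, hG]
  linarith

/-- Under a global expected entropy constraint (w.r.t. a state distribution `ν`),
the family of Boltzmann policies `g (a|s) = exp (Q s a / α) / Z s` with a common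
temperature `α` maximizes the global expected action value
`∫∫ Q s a · p (a|s) dμ(a) dν(s)`. -/
theorem boltzmann_family_maximizes_global_expected_value
    {S A : Type*} [MeasurableSpace S] [MeasurableSpace A]
    (ν : Measure S) [IsProbabilityMeasure ν]
    (μ : Measure A) [SigmaFinite μ]
    (Q : S → A → ℝ) (hQ : Measurable (Function.uncurry Q))
    (α : ℝ) (hα : 0 < α)
    (Z : S → ℝ)
    (hZint : ∀ᵐ s ∂ν, Integrable (fun a => Real.exp (Q s a / α)) μ)
    (hZdef : ∀ᵐ s ∂ν, Z s = ∫ a, Real.exp (Q s a / α) ∂μ)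
    (hZpos : ∀ᵐ s ∂ν, 0 < Z s)
    (g : S → A → ℝ) (hgdef : ∀ s a, g s a = Real.exp (Q s a / α) / Z s)
    (p : S → A → ℝ) (hpmeas : Measurable (Function.uncurry p))
    (hpnn : ∀ s a, 0 ≤ p s a)
    (hpdens : ∀ᵐ s ∂ν, Integrable (p s) μ ∧ ∫ a, p s a ∂μ = 1)
    (hQp : ∀ᵐ s ∂ν, Integrable (fun a => Q s a * p s a) μ)
    (hEntp : ∀ᵐ s ∂ν, Integrable (fun a => p s a * Real.log (p s a)) μ)
    (hQg : ∀ᵐ s ∂ν, Integrable (fun a => Q s a * g s a) μ)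
    (hEntg : ∀ᵐ s ∂ν, Integrable (fun a => g s a * Real.log (g s a)) μ)
    (hQpν : Integrable (fun s => ∫ a, Q s a * p s a ∂μ) ν)
    (hEntpν : Integrable (fun s => -∫ a, p s a * Real.log (p s a) ∂μ) ν)
    (hQgν : Integrable (fun s => ∫ a, Q s a * g s a ∂μ) ν)
    (hEntgν : Integrable (fun s => -∫ a, g s a * Real.log (g s a) ∂μ) ν)
    (hent_constraint :
      ∫ s, (-∫ a, p s a * Real.log (p s a) ∂μ) ∂ν
        = ∫ s, (-∫ a, g s a * Real.log (g s a) ∂μ) ∂ν) :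
    ∫ s, (∫ a, Q s a * p s a ∂μ) ∂ν ≤ ∫ s, (∫ a, Q s a * g s a ∂μ) ∂ν := by
  have hae : ∀ᵐ s ∂ν,
      (∫ a, Q s a * p s a ∂μ) + α * (-∫ a, p s a * Real.log (p s a) ∂μ)
        ≤ (∫ a, Q s a * g s a ∂μ) + α * (-∫ a, g s a * Real.log (g s a) ∂μ) := by
    filter_upwards [hZint, hZdef, hZpos, hpdens, hQp, hEntp, hQg] with
      s h1 h2 h3 h4 h5 h6 h7
    exact gibbs_state μ (Q s) α hα (Z s) h1 h2 h3 (g s) (p s) (hgdef s)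
      (hpnn s) h4.1 h4.2 h5 h6 h7
  have hint : ∫ s, ((∫ a, Q s a * p s a ∂μ)
        + α * (-∫ a, p s a * Real.log (p s a) ∂μ)) ∂ν
      ≤ ∫ s, ((∫ a, Q s a * g s a ∂μ)
        + α * (-∫ a, g s a * Real.log (g s a) ∂μ)) ∂ν :=
    integral_mono_ae (hQpν.add (hEntpν.const_mul α))
      (hQgν.add (hEntgν.const_mul α)) hae
  rw [integral_add hQpν (hEntpν.const_mul α),
    integral_add hQgν (hEntgν.const_mul α),
    integral_const_mul, integral_const_mul, hent_constraint] at hint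
  linarith
end
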